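/- Under the public-budget BCB setting of the four-player, three-slot counterexample, in any Nash equilibrium no slot is left empty. -/

import Mathlib

/-- The bid (or other attribute) of the player occupying rank `r` in the ordering `π`
(rank `0` is the highest bidder); `0` for out-of-range ranks. -/
noncomputable def rankVal {n : ℕ} (f : Fin n → ℝ) (π : Equiv.Perm (Fin n)) (r : ℕ) : ℝ :=
  if h : r < n then f (π ⟨r, h⟩) else 0

/-- `π` lists the players in decreasing order of their bids `b`,
breaking ties according to the fixed priority order `prio` (lower `prio` = higher priority). -/
def IsBidOrder {n : ℕ} (b : Fin n → ℝ) (prio : Fin n → ℕ) (π : Equiv.Perm (Fin n)) : Prop :=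
  ∀ r r' : Fin n, r < r' →
    b (π r) > b (π r') ∨ (b (π r) = b (π r') ∧ prio (π r) < prio (π r'))

/-- BCB: like BCP, but a player may only take a slot that he could afford were he to pay
his *own* value-bid `rb r`. -/
noncomputable def bcbAvail {k : ℕ} (θ : Fin k → ℝ) (rb rg : ℕ → ℝ) : ℕ → Finset (Fin k)
  | 0 => Finset.univ
  | r + 1 =>
    let F := (bcbAvail θ rb rg r).filter fun s => θ s * rb r ≤ rg r
    if h : F.Nonempty then (bcbAvail θ rb rg r).erase (F.min' h) else bcbAvail θ rb rg r

/-- BCB: the slot assigned to the player of rank `r` (or `none`). -/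
noncomputable def bcbSlot {k : ℕ} (θ : Fin k → ℝ) (rb rg : ℕ → ℝ) (r : ℕ) : Option (Fin k) :=
  let F := (bcbAvail θ rb rg r).filter fun s => θ s * rb r ≤ rg r
  if h : F.Nonempty then some (F.min' h) else none

/-- Utility of player `i` under BCB. -/
noncomputable def bcbUtil {n k : ℕ} (θ : Fin k → ℝ) (v B b g : Fin n → ℝ)
    (π : Equiv.Perm (Fin n)) (i : Fin n) : EReal :=
  let r := (π.symm i : ℕ)
  let p := rankVal b π (r + 1)
  match bcbSlot θ (rankVal b π) (rankVal g π) r with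
  | none => 0
  | some s => if θ s * p ≤ B i then ((θ s * (v i - p) : ℝ) : EReal) else ⊥


section BCBaux

lemma bcbAvail_succ_def {k : ℕ} (θ : Fin k → ℝ) (rb rg : ℕ → ℝ) (n : ℕ) :
    bcbAvail θ rb rg (n+1) =
      (let F := (bcbAvail θ rb rg n).filter fun s => θ s * rb n ≤ rg n
       if h : F.Nonempty then (bcbAvail θ rb rg n).erase (F.min' h) else bcbAvail θ rb rg n) :=
  rfl

lemma bcbAvail_of_none {k : ℕ} {θ : Fin k → ℝ} {rb rg : ℕ → ℝ} {n : ℕ}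
    (h : bcbSlot θ rb rg n = none) : bcbAvail θ rb rg (n+1) = bcbAvail θ rb rg n := by
  rw [bcbAvail_succ_def]
  unfold bcbSlot at h
  by_cases hne : ((bcbAvail θ rb rg n).filter fun s => θ s * rb n ≤ rg n).Nonempty
  · simp [hne] at h
  · simp [hne]

lemma bcbAvail_of_some {k : ℕ} {θ : Fin k → ℝ} {rb rg : ℕ → ℝ} {n : ℕ} {s : Fin k}
    (h : bcbSlot θ rb rg n = some s) :
    bcbAvail θ rb rg (n+1) = (bcbAvail θ rb rg n).erase s ∧ s ∈ bcbAvail θ rb rg n := by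
  rw [bcbAvail_succ_def]
  unfold bcbSlot at h
  by_cases hne : ((bcbAvail θ rb rg n).filter fun s => θ s * rb n ≤ rg n).Nonempty
  · simp only [hne, dif_pos, Option.some.injEq] at h ⊢
    subst h
    exact ⟨rfl, (Finset.mem_filter.mp (Finset.min'_mem _ hne)).1⟩
  · simp [hne] at h

lemma mem_bcbAvail {k : ℕ} {θ : Fin k → ℝ} {rb rg : ℕ → ℝ} {j : Fin k} (n : ℕ)
    (h : ∀ m, m < n → bcbSlot θ rb rg m ≠ some j) : j ∈ bcbAvail θ rb rg n := by
  induction n with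
  | zero => simp [bcbAvail]
  | succ n ih =>
    have hj := ih (fun m hm => h m (by omega))
    cases hs : bcbSlot θ rb rg n with
    | none => rw [bcbAvail_of_none hs]; exact hj
    | some s =>
      rw [(bcbAvail_of_some hs).1, Finset.mem_erase]
      exact ⟨fun e => h n (by omega) (e ▸ hs), hj⟩

lemma bcbAvail_congr {k : ℕ} (θ : Fin k → ℝ) (rb rg rb' rg' : ℕ → ℝ) (n : ℕ)
    (h : ∀ m, m < n → rb' m = rb m ∧ rg' m = rg m) :
    bcbAvail θ rb' rg' n = bcbAvail θ rb rg n := by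
  induction n with
  | zero => rfl
  | succ n ih =>
    have e := ih (fun m hm => h m (by omega))
    rw [bcbAvail_succ_def, bcbAvail_succ_def, e, (h n (by omega)).1, (h n (by omega)).2]

lemma bcbAvail_shift {k : ℕ} (θ : Fin k → ℝ) (rb rg rb' rg' : ℕ → ℝ) (r : ℕ)
    (hbase : bcbAvail θ rb' rg' r = bcbAvail θ rb rg (r+1)) :
    ∀ n, r ≤ n → (∀ m, r ≤ m → m < n → rb' m = rb (m+1) ∧ rg' m = rg (m+1)) →
    bcbAvail θ rb' rg' n = bcbAvail θ rb rg (n+1) := by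
  intro n
  induction n with
  | zero =>
    intro hr _
    have : r = 0 := by omega
    subst this
    exact hbase
  | succ n ih =>
    intro hr h
    rcases Nat.lt_or_ge r (n+1) with hlt | hge
    · have hr' : r ≤ n := by omega
      have e := ih hr' (fun m h1 h2 => h m h1 (by omega))
      rw [bcbAvail_succ_def, bcbAvail_succ_def, e, (h n hr' (by omega)).1,
        (h n hr' (by omega)).2]
    · have : r = n + 1 := by omega
      subst this
      exact hbase

lemma exists_bidOrder {n : ℕ} (c : Fin n → ℝ) :
    IsBidOrder c (fun i => (i : ℕ)) (Tuple.sort (fun kk => toLex (-(c kk), (kk : ℕ)))) := by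
  set key : Fin n → ℝ ×ₗ ℕ := fun kk => toLex (-(c kk), (kk : ℕ)) with hkey
  intro s s' hss
  have hm : key ((Tuple.sort key) s) ≤ key ((Tuple.sort key) s') :=
    Tuple.monotone_sort key (le_of_lt hss)
  have hne : key ((Tuple.sort key) s) ≠ key ((Tuple.sort key) s') := by
    intro e
    have : ((Tuple.sort key) s : ℕ) = ((Tuple.sort key) s' : ℕ) :=
      congrArg (fun p => (ofLex p).2) e
    exact absurd ((Tuple.sort key).injective (Fin.val_injective this)) (ne_of_lt hss)
  have hlt := lt_of_le_of_ne hm hne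
  rcases Prod.Lex.lt_iff.mp hlt with h | ⟨h1, h2⟩
  · left; simpa [key] using h
  · right; exact ⟨by linarith [neg_injective h1], h2⟩

set_option maxRecDepth 4000 in
lemma perm_shift : ∀ (τ : Equiv.Perm (Fin 4)) (r : Fin 4), τ r = 3 →
    (∀ s s' : Fin 4, s ≠ r → s' ≠ r → (s < s' ↔ τ s < τ s')) →
    ∀ t : Fin 4, (t:ℕ) < 3 →
      (τ.symm t : ℕ) = if (t:ℕ) < (r:ℕ) then (t:ℕ) else (t:ℕ)+1 := by decide

end BCBaux

attribute [local irreducible] bcbAvail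

/-- In the public-budget BCB counterexample setting (three slots, four players with distinct
budgets, valuations exceeding `B 0 / θ 2`, ties by budget order), in any Nash equilibrium of
the value-bids no slot is left empty: every slot is assigned to some player. -/


theorem bcb_public_budgets_nash_no_empty_slot
    (θ : Fin 3 → ℝ) (B : Fin 4 → ℝ) (v : Fin 4 → ℝ)
    (hθpos : ∀ j, 0 < θ j) (hθ : StrictAnti θ)
    (hBpos : ∀ i, 0 < B i) (hB : StrictAnti B)
    -- the twelve values B i / θ j are ordered as in the counterexample:
    (hchain : B 3 / θ 0 < B 2 / θ 0 ∧ B 2 / θ 0 < B 1 / θ 0 ∧ B 1 / θ 0 < B 0 / θ 0 ∧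
      B 0 / θ 0 < B 3 / θ 1 ∧ B 3 / θ 1 < B 2 / θ 1 ∧ B 2 / θ 1 < B 1 / θ 1 ∧
      B 1 / θ 1 < B 0 / θ 1 ∧ B 0 / θ 1 < B 3 / θ 2 ∧ B 3 / θ 2 < B 2 / θ 2 ∧
      B 2 / θ 2 < B 1 / θ 2 ∧ B 1 / θ 2 < B 0 / θ 2)
    -- all valuations exceed B 0 / θ 2:
    (hv : ∀ i, B 0 / θ 2 < v i)
    (b : Fin 4 → ℝ) (π : Equiv.Perm (Fin 4))
    (hπ : IsBidOrder b (fun i => (i : ℕ)) π)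
    (hNE : ∀ (i : Fin 4) (b' : ℝ) (π' : Equiv.Perm (Fin 4)),
      IsBidOrder (Function.update b i b') (fun i => (i : ℕ)) π' →
      bcbUtil θ v B (Function.update b i b') B π' i ≤ bcbUtil θ v B b B π i) :
    ∀ j : Fin 3, ∃ i : Fin 4,
      bcbSlot θ (rankVal b π) (rankVal B π) ((π.symm i : ℕ)) = some j := by
  intro j
  by_contra hcon
  push_neg at hcon
  have hall : ∀ m, m < 4 → bcbSlot θ (rankVal b π) (rankVal B π) m ≠ some j := by
    intro m hm
    have h := hcon (π ⟨m, hm⟩)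
    simpa using h
  have hmem : ∀ n, n ≤ 4 → j ∈ bcbAvail θ (rankVal b π) (rankVal B π) n := fun n hn =>
    mem_bcbAvail n (fun m hm => hall m (by omega))
  -- there is an unassigned rank among 0,1,2
  have hnone : ∃ m, m < 3 ∧ bcbSlot θ (rankVal b π) (rankVal B π) m = none := by
    by_contra h
    push_neg at h
    have hsome : ∀ m, m < 3 → ∃ s, bcbSlot θ (rankVal b π) (rankVal B π) m = some s := by
      intro m hm
      cases hs : bcbSlot θ (rankVal b π) (rankVal B π) m with
      | none => exact absurd hs (h m hm)
      | some s => exact ⟨s, rfl⟩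
    obtain ⟨s0, h0⟩ := hsome 0 (by omega)
    obtain ⟨s1, h1⟩ := hsome 1 (by omega)
    obtain ⟨s2, h2⟩ := hsome 2 (by omega)
    have c0 : (bcbAvail θ (rankVal b π) (rankVal B π) 0).card = 3 := by
      simp [bcbAvail]
    have c1 : (bcbAvail θ (rankVal b π) (rankVal B π) 1).card = 2 := by
      rw [(bcbAvail_of_some h0).1, Finset.card_erase_of_mem (bcbAvail_of_some h0).2, c0]
    have c2 : (bcbAvail θ (rankVal b π) (rankVal B π) 2).card = 1 := by
      rw [(bcbAvail_of_some h1).1, Finset.card_erase_of_mem (bcbAvail_of_some h1).2, c1]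
    have c3 : (bcbAvail θ (rankVal b π) (rankVal B π) 3).card = 0 := by
      rw [(bcbAvail_of_some h2).1, Finset.card_erase_of_mem (bcbAvail_of_some h2).2, c2]
    have hpos := Finset.card_pos.mpr ⟨j, hmem 3 (by omega)⟩
    omega
  obtain ⟨t0, ht0, hS0⟩ := hnone
  have ht0' : t0 < 4 := by omega
  set r0 : Fin 4 := ⟨t0, ht0'⟩ with hr0
  set i : Fin 4 := π r0 with hidef
  have hsymmv : ((π.symm i : Fin 4) : ℕ) = t0 := by
    rw [hidef, Equiv.symm_apply_apply]
  -- the old utility of player i is 0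
  have hU0 : bcbUtil θ v B b B π i = 0 := by
    simp only [bcbUtil, hsymmv, hS0]
  -- the deviation bid
  set b' : ℝ := min (B i / θ j) (b (π 3)) - 1 with hb'def
  have hb'le1 : b' < B i / θ j := by
    have := min_le_left (B i / θ j) (b (π 3))
    rw [hb'def]; linarith
  have hb'lt2 : b' < b (π 3) := by
    have := min_le_right (B i / θ j) (b (π 3))
    rw [hb'def]; linarith
  have hblast : ∀ s : Fin 4, b (π 3) ≤ b (π s) := by
    intro s
    by_cases hs : s = 3
    · subst hs; exact le_rfl
    · have hlt : s < (3 : Fin 4) := by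
        rw [Fin.lt_def]
        have h1 := s.isLt
        have h2 : (s : ℕ) ≠ ((3 : Fin 4) : ℕ) := fun e => hs (Fin.ext e)
        have h3 : ((3 : Fin 4) : ℕ) = 3 := rfl
        omega
      rcases hπ s 3 hlt with h | ⟨h, _⟩ <;> linarith
  have hb'lt : ∀ kk : Fin 4, b' < b kk := by
    intro kk
    have h1 : b (π 3) ≤ b kk := by
      have := hblast (π.symm kk)
      simpa using this
    linarith
  have hθjb' : θ j * b' ≤ B i := by
    have h2 := (lt_div_iff₀ (hθpos j)).mp hb'le1
    nlinarith [hθpos j]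
  set b'' : Fin 4 → ℝ := Function.update b i b' with hb''def
  have hb''i : b'' i = b' := by rw [hb''def]; simp
  have hb''ne : ∀ kk : Fin 4, kk ≠ i → b'' kk = b kk := fun kk h => by
    rw [hb''def]; exact Function.update_of_ne h _ _
  set π' : Equiv.Perm (Fin 4) := Tuple.sort (fun kk => toLex (-(b'' kk), (kk : ℕ))) with hπ'def
  have hπ'ord : IsBidOrder b'' (fun i => (i : ℕ)) π' := exists_bidOrder b''
  -- i is the last-ranked player under π'
  have hlast : π' 3 = i := by
    by_contra hne
    have hsym3 : π'.symm i ≠ 3 := by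
      intro e
      exact hne (by rw [← e, Equiv.apply_symm_apply])
    have htlt : π'.symm i < (3 : Fin 4) := by
      rw [Fin.lt_def]
      have h1 := (π'.symm i).isLt
      have h2 : ((π'.symm i : Fin 4) : ℕ) ≠ ((3 : Fin 4) : ℕ) := fun e => hsym3 (Fin.ext e)
      have h3 : ((3 : Fin 4) : ℕ) = 3 := rfl
      omega
    have hbo := hπ'ord (π'.symm i) 3 htlt
    rw [Equiv.apply_symm_apply] at hbo
    have hk : π' 3 ≠ i := hne
    have hlt := hb'lt (π' 3)
    rw [hb''i, hb''ne _ hk] at hbo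
    rcases hbo with h | ⟨h, _⟩ <;> linarith
  have hsymm' : π'.symm i = 3 := by rw [← hlast, Equiv.symm_apply_apply]
  set τ : Equiv.Perm (Fin 4) := π.trans π'.symm with hτdef
  have hτr : τ r0 = 3 := by
    rw [hτdef]
    simp only [Equiv.trans_apply]
    rw [← hidef, hsymm']
  have hπ'eq : ∀ x : Fin 4, π' x = π (τ.symm x) := by
    intro x
    have : τ.symm x = π.symm (π' x) := by rw [hτdef]; rfl
    rw [this, Equiv.apply_symm_apply]
  have hmono : ∀ s s' : Fin 4, s ≠ r0 → s' ≠ r0 → s < s' → τ s < τ s' := by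
    intro s s' hs hs' hss
    have hks : π s ≠ i := fun e => hs (π.injective (e.trans hidef))
    have hks' : π s' ≠ i := fun e => hs' (π.injective (e.trans hidef))
    have h1 := hπ s s' hss
    rcases lt_trichotomy (τ s) (τ s') with h | h | h
    · exact h
    · exact absurd (τ.injective h) (ne_of_lt hss)
    · exfalso
      have h2 := hπ'ord (τ s') (τ s) h
      have e1 : π' (τ s) = π s := by rw [hπ'eq, Equiv.symm_apply_apply]
      have e2 : π' (τ s') = π s' := by rw [hπ'eq, Equiv.symm_apply_apply]
      rw [e1, e2, hb''ne _ hks, hb''ne _ hks'] at h2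
      rcases h1 with ha | ⟨ha, hpa⟩ <;> rcases h2 with hb | ⟨hb, hpb⟩ <;>
        first | linarith | omega
  have horder : ∀ s s' : Fin 4, s ≠ r0 → s' ≠ r0 → (s < s' ↔ τ s < τ s') := by
    intro s s' hs hs'
    constructor
    · exact hmono s s' hs hs'
    · intro h
      rcases lt_trichotomy s s' with h1 | h1 | h1
      · exact h1
      · exact absurd (h1 ▸ h) (lt_irrefl _)
      · exact absurd h (asymm (hmono s' s hs' hs h1))
  have hshift := perm_shift τ r0 hτr horder
  -- rank values of the new profile below rank 3
  have hrbv : ∀ m, m < 3 →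
      rankVal b'' π' m = rankVal b π (if m < t0 then m else m + 1) ∧
      rankVal B π' m = rankVal B π (if m < t0 then m else m + 1) := by
    intro m hm
    have hm4 : m < 4 := by omega
    have hv1 : ((τ.symm ⟨m, hm4⟩ : Fin 4) : ℕ) = if m < t0 then m else m + 1 :=
      hshift ⟨m, hm4⟩ hm
    have hlt4 : (if m < t0 then m else m + 1) < 4 := by split <;> omega
    have hfin : (⟨if m < t0 then m else m + 1, hlt4⟩ : Fin 4) = τ.symm ⟨m, hm4⟩ :=
      Fin.ext (by rw [hv1])
    have hsne : π' ⟨m, hm4⟩ ≠ i := by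
      intro e
      have e2 : (⟨m, hm4⟩ : Fin 4) = (3 : Fin 4) := π'.injective (by rw [e, hlast])
      have e3 : m = 3 := congrArg Fin.val e2
      omega
    constructor
    · rw [rankVal, rankVal, dif_pos hm4, dif_pos hlt4, hfin, ← hπ'eq, hb''ne _ hsne]
    · rw [rankVal, rankVal, dif_pos hm4, dif_pos hlt4, hfin, ← hπ'eq]
  -- available slots coincide after the shift
  have hbase : bcbAvail θ (rankVal b'' π') (rankVal B π') t0 =
      bcbAvail θ (rankVal b π) (rankVal B π) (t0 + 1) := by
    rw [bcbAvail_of_none hS0]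
    exact bcbAvail_congr θ _ _ _ _ t0 (fun m hm => by
      have h := hrbv m (by omega)
      rw [if_pos hm] at h
      exact h)
  have hA3 : bcbAvail θ (rankVal b'' π') (rankVal B π') 3 =
      bcbAvail θ (rankVal b π) (rankVal B π) 4 :=
    bcbAvail_shift θ _ _ _ _ t0 hbase 3 (by omega) (fun m h1 h2 => by
      have h := hrbv m h2
      rw [if_neg (by omega)] at h
      exact h)
  have hj' : j ∈ bcbAvail θ (rankVal b'' π') (rankVal B π') 3 := by
    rw [hA3]; exact hmem 4 le_rfl
  have hrb3 : rankVal b'' π' 3 = b' := by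
    rw [rankVal, dif_pos (by omega : (3:ℕ) < 4)]
    have : (⟨3, by omega⟩ : Fin 4) = (3 : Fin 4) := rfl
    rw [this, hlast, hb''i]
  have hrg3 : rankVal B π' 3 = B i := by
    rw [rankVal, dif_pos (by omega : (3:ℕ) < 4)]
    have : (⟨3, by omega⟩ : Fin 4) = (3 : Fin 4) := rfl
    rw [this, hlast]
  have hjF : j ∈ (bcbAvail θ (rankVal b'' π') (rankVal B π') 3).filter
      (fun s => θ s * rankVal b'' π' 3 ≤ rankVal B π' 3) :=
    Finset.mem_filter.mpr ⟨hj', by rw [hrb3, hrg3]; exact hθjb'⟩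
  have hFne : ((bcbAvail θ (rankVal b'' π') (rankVal B π') 3).filter
      (fun s => θ s * rankVal b'' π' 3 ≤ rankVal B π' 3)).Nonempty := ⟨j, hjF⟩
  have hslot' : bcbSlot θ (rankVal b'' π') (rankVal B π') 3 =
      some (Finset.min' _ hFne) := by
    unfold bcbSlot
    rw [dif_pos hFne]
  have hvipos : 0 < v i := lt_trans (div_pos (hBpos 0) (hθpos 2)) (hv i)
  have hUpos : (0 : EReal) < bcbUtil θ v B b'' B π' i := by
    have h34 : ((3 : Fin 4) : ℕ) = 3 := rfl
    have hp : rankVal b'' π' (3 + 1) = 0 := by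
      rw [rankVal, dif_neg (by omega : ¬ (3 + 1 < 4))]
    simp only [bcbUtil, hsymm', h34, hslot', hp, mul_zero, sub_zero]
    rw [if_pos (hBpos i).le]
    exact_mod_cast mul_pos (hθpos _) hvipos
  have hle := hNE i b' π' hπ'ord
  rw [← hb''def] at hle
  rw [hU0] at hle
  exact absurd (lt_of_lt_of_le hUpos hle) (lt_irrefl 0)
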